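/- arXiv:math/0601454 — 3 statements merged into one kernel-verified Lean document; each statement's English description precedes it below -/
import Mathlib

section
/- The presented group with generators x₁, x₂, x₃, x₄ and defining relations (x₃x₄)² = (x₄x₃)², x₂ = x₄x₃x₄⁻¹, x₁ = x₄, (x₁x₂)² = (x₂x₁)², x₃ = x₂x₁x₂x₁⁻¹x₂⁻¹, x₄ = x₃x₂x₁x₂⁻¹x₃⁻¹, and x₄x₃x₂x₁ = e is isomorphic to the presented group ⟨a₁, a₂ | (a₁a₂)² = e⟩. -/
private def x : Fin 4 → FreeGroup (Fin 4) := FreeGroup.of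

def relsA2vk : Set (FreeGroup (Fin 4)) :=
  { (x 2 * x 3) ^ 2 * ((x 3 * x 2) ^ 2)⁻¹,
    x 1 * (x 3 * x 2 * (x 3)⁻¹)⁻¹,
    x 0 * (x 3)⁻¹,
    (x 0 * x 1) ^ 2 * ((x 1 * x 0) ^ 2)⁻¹,
    x 2 * (x 1 * x 0 * x 1 * (x 0)⁻¹ * (x 1)⁻¹)⁻¹,
    x 3 * (x 2 * x 1 * x 0 * (x 1)⁻¹ * (x 2)⁻¹)⁻¹,
    x 3 * x 2 * x 1 * x 0 }

def relA2 : Set (FreeGroup (Fin 2)) :=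
  {(FreeGroup.of 0 * FreeGroup.of 1) ^ 2}

namespace A2aux

lemma relator_eq_one {α : Type*} {rels : Set (FreeGroup α)} {r : FreeGroup α} (h : r ∈ rels) :
    PresentedGroup.mk rels r = 1 := by
  have : r ∈ Subgroup.normalClosure rels := Subgroup.subset_normalClosure h
  exact (QuotientGroup.eq_one_iff r).2 this

-- abbreviations
local notation "a" => (PresentedGroup.of (rels := relA2) 0)
local notation "b" => (PresentedGroup.of (rels := relA2) 1)
local notation "y" i => (PresentedGroup.of (rels := relsA2vk) i)

lemma hab : a * (b * (a * b)) = 1 := by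
  have := relator_eq_one (rels := relA2) (r := (FreeGroup.of 0 * FreeGroup.of 1) ^ 2) rfl
  simpa [pow_two, mul_assoc, PresentedGroup.of] using this

lemma e1 (c : PresentedGroup relA2) : a * (b * (a * (b * c))) = c := by
  rw [← mul_assoc, ← mul_assoc, ← mul_assoc]
  simp [mul_assoc, hab]

lemma e2 (c : PresentedGroup relA2) : b * (a * (b * c)) = a⁻¹ * c := by
  rw [eq_inv_mul_iff_mul_eq]
  exact e1 c

lemma i0 : (b)⁻¹ * (a)⁻¹ = a * b := by
  have h := hab
  rw [← mul_assoc, ← mul_assoc] at h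
  rw [← mul_inv_rev]
  exact inv_eq_of_mul_eq_one_right (by rw [← mul_assoc]; simpa [mul_assoc] using h)

lemma i0' (c : PresentedGroup relA2) : (b)⁻¹ * ((a)⁻¹ * c) = a * (b * c) := by
  rw [← mul_assoc, i0, mul_assoc]

lemma j0 : (a)⁻¹ * (b)⁻¹ = b * a := by
  have h : (b * a) * (b * a) = 1 := by
    calc (b * a) * (b * a) = b * (a * (b * a)) := by group
    _ = a⁻¹ * a := e2 _
    _ = 1 := by group
  rw [← mul_inv_rev]
  exact inv_eq_of_mul_eq_one_right h

lemma j0' (c : PresentedGroup relA2) : (a)⁻¹ * ((b)⁻¹ * c) = b * (a * c) := by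
  rw [← mul_assoc, j0, mul_assoc]

def f : Fin 4 → PresentedGroup relA2 := ![a, a * b * a⁻¹, b, a]

lemma hf : ∀ r ∈ relsA2vk, FreeGroup.lift f r = 1 := by
  intro r hr
  simp only [relsA2vk, Set.mem_insert_iff, Set.mem_singleton_iff] at hr
  rcases hr with rfl|rfl|rfl|rfl|rfl|rfl|rfl <;>
    simp [x, f, pow_two, mul_assoc, e1, e2, hab, i0, i0', j0, j0']





lemma h7 : (y 3) * ((y 2) * ((y 1) * (y 0))) = 1 := by
  have := relator_eq_one (rels := relsA2vk) (r := x 3 * x 2 * x 1 * x 0)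
    (by simp [relsA2vk])
  simpa [x, map_mul, mul_assoc, PresentedGroup.of] using this

lemma h2 : (y 1) = (y 3) * ((y 2) * (y 3)⁻¹) := by
  have := relator_eq_one (rels := relsA2vk) (r := x 1 * (x 3 * x 2 * (x 3)⁻¹)⁻¹)
    (by simp [relsA2vk])
  simp only [x, map_mul, map_inv, mul_assoc, PresentedGroup.of] at this
  rw [mul_inv_eq_one] at this
  · simpa [mul_assoc, PresentedGroup.of] using this

lemma h3 : (y 0) = (y 3) := by
  have := relator_eq_one (rels := relsA2vk) (r := x 0 * (x 3)⁻¹)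
    (by simp [relsA2vk])
  simpa [x, map_mul, map_inv, mul_inv_eq_one, PresentedGroup.of] using this

def g : Fin 2 → PresentedGroup relsA2vk := ![y 3, y 2]

lemma hg : ∀ r ∈ relA2, FreeGroup.lift g r = 1 := by
  intro r hr
  simp only [relA2, Set.mem_singleton_iff] at hr
  subst hr
  have := h7
  rw [h2, h3] at this
  simpa [g, pow_two, mul_assoc] using this



def φ : PresentedGroup relsA2vk →* PresentedGroup relA2 := PresentedGroup.toGroup hf
def ψ : PresentedGroup relA2 →* PresentedGroup relsA2vk := PresentedGroup.toGroup hg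

lemma comp1 : ψ.comp φ = MonoidHom.id _ := by
  ext i
  fin_cases i
  · simpa [φ, ψ, PresentedGroup.toGroup.of, f, g] using h3.symm
  · simp only [MonoidHom.comp_apply, MonoidHom.id_apply, φ, ψ, PresentedGroup.toGroup.of, f]
    simp [PresentedGroup.toGroup.of, g, mul_assoc]
    exact h2.symm
  · simp [φ, ψ, PresentedGroup.toGroup.of, f, g]
  · simp [φ, ψ, PresentedGroup.toGroup.of, f, g]

lemma comp2 : φ.comp ψ = MonoidHom.id _ := by
  ext i
  fin_cases i <;> simp [φ, ψ, PresentedGroup.toGroup.of, f, g]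

end A2aux

theorem presentation_A2 :
    Nonempty (PresentedGroup relsA2vk ≃* PresentedGroup relA2) :=
  ⟨MonoidHom.toMulEquiv A2aux.φ A2aux.ψ A2aux.comp1 A2aux.comp2⟩
end

section
/- Let G be a group, let a₁,…,aₙ ∈ G (n ≥ 1), and let m be a positive integer. Then the following are equivalent: (1) the m-th powers of all n cyclic rotations of the product aₙaₙ₋₁⋯a₁ are equal, i.e. (aₙaₙ₋₁⋯a₁)^m = (a₁aₙ⋯a₂)^m = (a₂a₁aₙ⋯a₃)^m = ⋯ = (aₙ₋₁aₙ₋₂⋯a₁aₙ)^m; (2) every aᵢ (1 ≤ i ≤ n) commutes with (aₙaₙ₋₁⋯a₁)^m. In particular, for each k with 1 ≤ k ≤ n one has (aₖ₋₁aₖ₋₂⋯a₁aₙ⋯aₖ)^m = (aₖ₋₁aₖ₋₂⋯a₁)·(aₙaₙ₋₁⋯a₁)^m·(aₖ₋₁aₖ₋₂⋯a₁)⁻¹. -/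
/-- The `k`-th cyclic rotation (`k = r+1`) of the descending product `aₙaₙ₋₁⋯a₁`:
the element `aₖ₋₁aₖ₋₂⋯a₁ ⬝ aₙaₙ₋₁⋯aₖ` (here `a i` stands for `a_{i+1}`). -/
def rotProd {G : Type*} [Monoid G] (n : ℕ) (a : Fin n → G) (r : ℕ) : G :=
  (((List.finRange n).take r).reverse.map a).prod *
    (((List.finRange n).drop r).reverse.map a).prod

/-- The descending partial product `aₖ₋₁aₖ₋₂⋯a₁` (`k = r+1`, and `a i` stands for `a_{i+1}`). -/
def prefProd {G : Type*} [Monoid G] (n : ℕ) (a : Fin n → G) (r : ℕ) : G :=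
  (((List.finRange n).take r).reverse.map a).prod

lemma suff_mul_pref {G : Type*} [Group G] (n : ℕ) (a : Fin n → G) (r : ℕ) :
    (((List.finRange n).drop r).reverse.map a).prod * prefProd n a r = rotProd n a 0 := by
  have h : ((List.finRange n).drop r).reverse ++ ((List.finRange n).take r).reverse
      = (List.finRange n).reverse := by
    rw [← List.reverse_append, List.take_append_drop]
  rw [prefProd, ← List.prod_append, ← List.map_append, h]
  simp [rotProd]

lemma pref_succ {G : Type*} [Group G] (n : ℕ) (a : Fin n → G) (r : ℕ) (hr : r < n) :
    prefProd n a (r + 1) = a ⟨r, hr⟩ * prefProd n a r := by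
  have h : (List.finRange n).take (r + 1) = (List.finRange n).take r ++ [⟨r, hr⟩] := by
    rw [List.take_succ]
    congr
    simp [List.getElem?_eq_getElem, hr]
  rw [prefProd, h]
  simp [prefProd]

lemma rot_conj {G : Type*} [Group G] (n : ℕ) (a : Fin n → G) (r : ℕ) :
    rotProd n a r = prefProd n a r * rotProd n a 0 * (prefProd n a r)⁻¹ := by
  rw [← suff_mul_pref n a r]
  simp [rotProd, prefProd, mul_assoc]

/-- **Lemma.** In a group `G`, for `a₁, …, aₙ ∈ G` and `m ≥ 1` the following are equivalent:
(1) the `m`-th powers of all `n` cyclic rotations of `aₙaₙ₋₁⋯a₁` coincide;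
(2) every `aᵢ` commutes with `(aₙaₙ₋₁⋯a₁)^m`.
In particular `(aₖ₋₁⋯a₁aₙ⋯aₖ)^m = (aₖ₋₁⋯a₁)(aₙ⋯a₁)^m(aₖ₋₁⋯a₁)⁻¹` for every `1 ≤ k ≤ n`. -/
theorem rotation_powers_eq_iff_commute {G : Type*} [Group G] (n : ℕ) (hn : 1 ≤ n)
    (a : Fin n → G) (m : ℕ) (hm : 0 < m) :
    ((∀ r : ℕ, r < n → rotProd n a r ^ m = rotProd n a 0 ^ m) ↔
      (∀ i : Fin n, Commute (a i) (rotProd n a 0 ^ m))) ∧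
    (∀ r : ℕ, r < n →
      rotProd n a r ^ m = prefProd n a r * rotProd n a 0 ^ m * (prefProd n a r)⁻¹) := by
  set F := rotProd n a 0 with hF
  have hconj : ∀ r, rotProd n a r ^ m = prefProd n a r * F ^ m * (prefProd n a r)⁻¹ := by
    intro r
    rw [rot_conj n a r, ← hF, conj_pow]
  have hpn : prefProd n a n = F := by
    have : (((List.finRange n).drop n).reverse.map a).prod = 1 := by
      rw [List.drop_eq_nil_of_le (by simp)]; simp
    have h := suff_mul_pref n a n
    rw [this, one_mul] at h
    rw [h]
  refine ⟨⟨?_, ?_⟩, fun r _ => hconj r⟩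
  · intro h i
    have hcomm : ∀ r, r ≤ n → Commute (prefProd n a r) (F ^ m) := by
      intro r hr
      rcases eq_or_lt_of_le hr with rfl | hr'
      · rw [hpn]; exact (Commute.refl F).pow_right m
      · have := h r hr'
        rw [hconj r] at this
        exact mul_inv_eq_iff_eq_mul.mp this
    have h1 := hcomm i (le_of_lt i.2)
    have h2 := hcomm (i + 1) i.2
    rw [pref_succ n a i i.2] at h2
    have ha : a ⟨i, i.2⟩ = a i := by congr
    have hc : Commute (a ⟨i, i.2⟩) (F ^ m) := by
      have := h2.mul_left h1.inv_left
      simpa [mul_assoc] using this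
    rwa [ha] at hc
  · intro h r hr
    have hcomm : ∀ r, r ≤ n → Commute (prefProd n a r) (F ^ m) := by
      intro r
      induction r with
      | zero => intro _; simp [prefProd, Commute]
      | succ k ih =>
        intro hk
        rw [pref_succ n a k (by omega)]
        exact (h _).mul_left (ih (by omega))
    rw [hconj r, (hcomm r (le_of_lt hr)).eq]
    group
end

section
/- Let n ≥ 1, m ≥ 0, and let w₁,…,wₘ be elements of the free group on generators μ₁,…,μₙ. Let G′ be the presented group with generators μ₁,…,μₙ, σ₁, σ₂, σ₃ and defining relations [μᵢ, σⱼ] = e for all i ∈ {1,…,n} and j ∈ {1,2,3}, [σⱼ, σₖ] = e for all j, k ∈ {1,2,3}, w₁ = ⋯ = wₘ = e, and μ₁μ₂⋯μₙσ₁σ₂σ₃ = e. Then the quotient of G′ by the normal closure of the three elements σ₁σ₂, σ₂σ₃, σ₃σ₁ is isomorphic to the presented group ⟨μ₁,…,μₙ | [μᵢ, μ₁μ₂⋯μₙ] = e for i ∈ {1,…,n}; w₁ = ⋯ = wₘ = e; (μ₁μ₂⋯μₙ)² = e⟩. -/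
open scoped commutatorElement

/-- The product `μ₁μ₂⋯μₙ` in the free group on `μ₁, …, μₙ`. -/
def prodMu (n : ℕ) : FreeGroup (Fin n) :=
  (List.ofFn fun i : Fin n => FreeGroup.of i).prod

/-- The relators of `G′`: `[μᵢ, σⱼ] = e`, `[σⱼ, σₖ] = e`, `w₁ = ⋯ = wₘ = e` and
`μ₁⋯μₙσ₁σ₂σ₃ = e`, in the free group on `μ₁, …, μₙ, σ₁, σ₂, σ₃`. -/
def relsBig (n m : ℕ) (w : Fin m → FreeGroup (Fin n)) :
    Set (FreeGroup (Fin n ⊕ Fin 3)) :=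
  {r | (∃ (i : Fin n) (j : Fin 3),
          r = ⁅(FreeGroup.of (Sum.inl i) : FreeGroup (Fin n ⊕ Fin 3)),
            FreeGroup.of (Sum.inr j)⁆) ∨
       (∃ j k : Fin 3, r = ⁅(FreeGroup.of (Sum.inr j) : FreeGroup (Fin n ⊕ Fin 3)),
          FreeGroup.of (Sum.inr k)⁆) ∨
       (∃ t : Fin m, r = FreeGroup.map Sum.inl (w t)) ∨
       r = (List.ofFn fun i : Fin n => FreeGroup.of (Sum.inl i)).prod *
             (List.ofFn fun j : Fin 3 => FreeGroup.of (Sum.inr j)).prod}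

/-- The meridian `σⱼ` in `G′`. -/
def sigma (n m : ℕ) (w : Fin m → FreeGroup (Fin n)) (j : Fin 3) :
    PresentedGroup (relsBig n m w) :=
  PresentedGroup.of (Sum.inr j)

/-- The relators of the target presentation: `[μᵢ, μ₁⋯μₙ] = e`, `w₁ = ⋯ = wₘ = e`,
`(μ₁⋯μₙ)² = e`. -/
def relsSmall (n m : ℕ) (w : Fin m → FreeGroup (Fin n)) : Set (FreeGroup (Fin n)) :=
  {r | (∃ i : Fin n, r = ⁅FreeGroup.of i, prodMu n⁆) ∨
       (∃ t : Fin m, r = w t) ∨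
       r = (prodMu n) ^ 2}

lemma mk_rel_eq_one {α : Type*} {rels : Set (FreeGroup α)} {r : FreeGroup α} (h : r ∈ rels) :
    PresentedGroup.mk rels r = 1 :=
  (QuotientGroup.eq_one_iff r).2 (Subgroup.subset_normalClosure h)

section Aux

variable (n m : ℕ) (w : Fin m → FreeGroup (Fin n))

/-- The image of `μ₁⋯μₙ` in the small presented group. -/
def Pel : PresentedGroup (relsSmall n m w) :=
  PresentedGroup.mk _ (prodMu n)

lemma Pel_sq : Pel n m w * Pel n m w = 1 := by
  have := mk_rel_eq_one (rels := relsSmall n m w) (Or.inr (Or.inr rfl))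
  rw [map_pow, sq] at this
  exact this

lemma Pel_inv : (Pel n m w)⁻¹ = Pel n m w :=
  inv_eq_of_mul_eq_one_right (Pel_sq n m w)

lemma comm_Pel (i : Fin n) :
    Commute (PresentedGroup.of i : PresentedGroup (relsSmall n m w)) (Pel n m w) := by
  have := mk_rel_eq_one (rels := relsSmall n m w) (Or.inl ⟨i, rfl⟩)
  rw [map_commutatorElement] at this
  exact commutatorElement_eq_one_iff_commute.mp this

/-- The map on generators for `G′ → H`. -/
def fH : Fin n ⊕ Fin 3 → PresentedGroup (relsSmall n m w) :=
  Sum.elim (fun i => PresentedGroup.of i) (fun _ => (Pel n m w)⁻¹)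

lemma lift_fH_comp_map_inl :
    (FreeGroup.lift (fH n m w)).comp (FreeGroup.map Sum.inl)
      = PresentedGroup.mk (relsSmall n m w) := by
  apply FreeGroup.ext_hom
  intro a
  simp [fH, PresentedGroup.of]

lemma map_inl_prodMu :
    (FreeGroup.map Sum.inl (prodMu n) : FreeGroup (Fin n ⊕ Fin 3))
      = (List.ofFn fun i : Fin n => FreeGroup.of (Sum.inl i)).prod := by
  rw [prodMu, map_list_prod, List.map_ofFn]
  rfl

lemma hbig : ∀ r ∈ relsBig n m w, FreeGroup.lift (fH n m w) r = 1 := by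
  intro r hr
  rcases hr with ⟨i, j, rfl⟩ | ⟨j, k, rfl⟩ | ⟨t, rfl⟩ | rfl
  · rw [map_commutatorElement, FreeGroup.lift_apply_of, FreeGroup.lift_apply_of]
    exact commutatorElement_eq_one_iff_commute.mpr ((comm_Pel n m w i).inv_right)
  · rw [map_commutatorElement, FreeGroup.lift_apply_of, FreeGroup.lift_apply_of]
    exact commutatorElement_self _
  · have := congrArg (fun φ : FreeGroup (Fin n) →* PresentedGroup (relsSmall n m w) => φ (w t))
      (lift_fH_comp_map_inl n m w)
    simp only [MonoidHom.comp_apply] at this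
    rw [this]
    exact mk_rel_eq_one (Or.inr (Or.inl ⟨t, rfl⟩))
  · rw [map_mul]
    have h1 : FreeGroup.lift (fH n m w)
        ((List.ofFn fun i : Fin n => FreeGroup.of (Sum.inl i)).prod) = Pel n m w := by
      rw [← map_inl_prodMu]
      have := congrArg (fun φ : FreeGroup (Fin n) →* PresentedGroup (relsSmall n m w) =>
        φ (prodMu n)) (lift_fH_comp_map_inl n m w)
      exact this
    have h2 : FreeGroup.lift (fH n m w)
        ((List.ofFn fun j : Fin 3 => FreeGroup.of (Sum.inr j)).prod)
          = (Pel n m w)⁻¹ * ((Pel n m w)⁻¹ * (Pel n m w)⁻¹) := by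
      rw [map_list_prod, List.map_ofFn]
      show (List.ofFn fun j : Fin 3 =>
        FreeGroup.lift (fH n m w) (FreeGroup.of (Sum.inr j))).prod = _
      simp only [FreeGroup.lift_apply_of, fH, Sum.elim_inr]
      simp [List.ofFn_succ]
    rw [h1, h2, Pel_inv]
    have hP := Pel_sq n m w
    calc Pel n m w * (Pel n m w * (Pel n m w * Pel n m w))
        = (Pel n m w * Pel n m w) * (Pel n m w * Pel n m w) := by group
      _ = 1 := by rw [hP]; simp

end Aux

/-- **Theorem.** The quotient of
`G′ = ⟨μ₁, …, μₙ, σ₁, σ₂, σ₃ | [μᵢ,σⱼ] = [σⱼ,σₖ] = e, w₁ = ⋯ = wₘ = e, μ₁⋯μₙσ₁σ₂σ₃ = e⟩`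
by the normal closure of `σ₁σ₂, σ₂σ₃, σ₃σ₁` is isomorphic to
`⟨μ₁, …, μₙ | [μᵢ, μ₁⋯μₙ] = e, w₁ = ⋯ = wₘ = e, (μ₁⋯μₙ)² = e⟩`. -/
theorem quotient_by_coordinate_meridians (n m : ℕ) (hn : 1 ≤ n)
    (w : Fin m → FreeGroup (Fin n)) :
    Nonempty ((PresentedGroup (relsBig n m w) ⧸
        Subgroup.normalClosure
          {sigma n m w 0 * sigma n m w 1, sigma n m w 1 * sigma n m w 2,
           sigma n m w 2 * sigma n m w 0}) ≃*
      PresentedGroup (relsSmall n m w)) := by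
  classical
  set S : Set (PresentedGroup (relsBig n m w)) :=
    {sigma n m w 0 * sigma n m w 1, sigma n m w 1 * sigma n m w 2,
      sigma n m w 2 * sigma n m w 0} with hS
  set N := Subgroup.normalClosure S with hN
  let π : PresentedGroup (relsBig n m w) →* PresentedGroup (relsBig n m w) ⧸ N :=
    QuotientGroup.mk' N
  -- the forward map
  have hker : ∀ x ∈ N, PresentedGroup.toGroup (hbig n m w) x = 1 := by
    have hP := Pel_sq n m w
    have hPi := Pel_inv n m w
    have key : ∀ j k : Fin 3,
        PresentedGroup.toGroup (hbig n m w) (sigma n m w j * sigma n m w k) = 1 := by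
      intro j k
      rw [map_mul]
      show PresentedGroup.toGroup (hbig n m w) (PresentedGroup.of (Sum.inr j)) *
        PresentedGroup.toGroup (hbig n m w) (PresentedGroup.of (Sum.inr k)) = 1
      rw [PresentedGroup.toGroup.of, PresentedGroup.toGroup.of]
      show (Pel n m w)⁻¹ * (Pel n m w)⁻¹ = 1
      rw [hPi, hP]
    intro x hx
    refine Subgroup.normalClosure_le_normal (N := (PresentedGroup.toGroup (hbig n m w)).ker)
      ?_ hx
    intro y hy
    rcases hy with rfl | rfl | rfl <;> exact key _ _
  let φ : (PresentedGroup (relsBig n m w) ⧸ N) →* PresentedGroup (relsSmall n m w) :=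
    QuotientGroup.lift N (PresentedGroup.toGroup (hbig n m w)) hker
  -- facts about sigmas in the quotient
  have hzero : ∀ g ∈ S, π g = 1 := fun g hg =>
    (QuotientGroup.eq_one_iff g).2 (Subgroup.subset_normalClosure hg)
  have h01 : π (sigma n m w 0) * π (sigma n m w 1) = 1 := by
    rw [← map_mul]; exact hzero _ (Or.inl rfl)
  have h12 : π (sigma n m w 1) * π (sigma n m w 2) = 1 := by
    rw [← map_mul]; exact hzero _ (Or.inr (Or.inl rfl))
  have h20 : π (sigma n m w 2) * π (sigma n m w 0) = 1 := by
    rw [← map_mul]; exact hzero _ (Or.inr (Or.inr rfl))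
  have hb : π (sigma n m w 1) = (π (sigma n m w 0))⁻¹ :=
    (inv_eq_of_mul_eq_one_right h01).symm
  have hc : π (sigma n m w 2) = π (sigma n m w 0) := by
    have := (inv_eq_of_mul_eq_one_right h12).symm
    rw [hb, inv_inv] at this
    exact this
  have haa : π (sigma n m w 0) * π (sigma n m w 0) = 1 := by
    rw [hc] at h20; exact h20
  have hainv : (π (sigma n m w 0))⁻¹ = π (sigma n m w 0) :=
    inv_eq_of_mul_eq_one_right haa
  -- the backward map
  let ρ : FreeGroup (Fin n) →* PresentedGroup (relsBig n m w) :=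
    (PresentedGroup.mk (relsBig n m w)).comp (FreeGroup.map Sum.inl)
  let gQ : Fin n → PresentedGroup (relsBig n m w) ⧸ N := fun i => π (ρ (FreeGroup.of i))
  have hliftgQ : FreeGroup.lift gQ = π.comp ρ := by
    apply FreeGroup.ext_hom; intro a; simp [gQ]
  -- Σ' and M'
  have hSg : (PresentedGroup.mk (relsBig n m w)
      ((List.ofFn fun j : Fin 3 => FreeGroup.of (Sum.inr j)).prod))
        = sigma n m w 0 * sigma n m w 1 * sigma n m w 2 := by
    rw [map_list_prod, List.map_ofFn]
    show (List.ofFn fun j : Fin 3 =>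
      PresentedGroup.mk (relsBig n m w) (FreeGroup.of (Sum.inr j))).prod = _
    simp [List.ofFn_succ, sigma, PresentedGroup.of, mul_assoc]
  have hMSg : ρ (prodMu n) * (sigma n m w 0 * sigma n m w 1 * sigma n m w 2) = 1 := by
    rw [← hSg]
    have := mk_rel_eq_one (rels := relsBig n m w) (Or.inr (Or.inr (Or.inr rfl)))
    rw [map_mul] at this
    have hMeq : ρ (prodMu n) = PresentedGroup.mk (relsBig n m w)
        ((List.ofFn fun i : Fin n => FreeGroup.of (Sum.inl i)).prod) := by
      show PresentedGroup.mk (relsBig n m w) (FreeGroup.map Sum.inl (prodMu n)) = _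
      rw [map_inl_prodMu]
    rw [hMeq]
    exact this
  have hMinv : ρ (prodMu n) = (sigma n m w 0 * sigma n m w 1 * sigma n m w 2)⁻¹ :=
    eq_inv_of_mul_eq_one_left hMSg
  have hcommσ : ∀ (i : Fin n) (j : Fin 3),
      Commute (PresentedGroup.of (Sum.inl i) : PresentedGroup (relsBig n m w))
        (sigma n m w j) := by
    intro i j
    have := mk_rel_eq_one (rels := relsBig n m w) (Or.inl ⟨i, j, rfl⟩)
    rw [map_commutatorElement] at this
    exact commutatorElement_eq_one_iff_commute.mp this
  have hcommM : ∀ i : Fin n,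
      Commute (PresentedGroup.of (Sum.inl i) : PresentedGroup (relsBig n m w))
        (ρ (prodMu n)) := by
    intro i
    rw [hMinv]
    exact (((hcommσ i 0).mul_right (hcommσ i 1)).mul_right (hcommσ i 2)).inv_right
  have hpiSg : π (sigma n m w 0 * sigma n m w 1 * sigma n m w 2) = π (sigma n m w 0) := by
    rw [map_mul, map_mul, mul_assoc, h12, mul_one]
  have hpiM : π (ρ (prodMu n)) = π (sigma n m w 0) := by
    rw [hMinv, map_inv, hpiSg, hainv]
  have hsmall : ∀ r ∈ relsSmall n m w, FreeGroup.lift gQ r = 1 := by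
    intro r hr
    rcases hr with ⟨i, rfl⟩ | ⟨t, rfl⟩ | rfl
    · rw [hliftgQ]
      show π (ρ ⁅FreeGroup.of i, prodMu n⁆) = 1
      rw [map_commutatorElement]
      have : ρ (FreeGroup.of i) = PresentedGroup.of (Sum.inl i) := rfl
      rw [this, commutatorElement_eq_one_iff_commute.mpr (hcommM i), map_one]
    · rw [hliftgQ]
      show π (ρ (w t)) = 1
      have : ρ (w t) = 1 := mk_rel_eq_one (Or.inr (Or.inr (Or.inl ⟨t, rfl⟩)))
      rw [this, map_one]
    · rw [hliftgQ]
      show π (ρ (prodMu n ^ 2)) = 1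
      rw [map_pow, map_pow, sq, hpiM, haa]
  let ψ : PresentedGroup (relsSmall n m w) →* PresentedGroup (relsBig n m w) ⧸ N :=
    PresentedGroup.toGroup hsmall
  have hψPel : ψ (Pel n m w) = π (sigma n m w 0) := by
    have h0 : ψ (Pel n m w) = FreeGroup.lift gQ (prodMu n) := rfl
    rw [h0, hliftgQ]
    exact hpiM
  have h1 : φ.comp ψ = MonoidHom.id (PresentedGroup (relsSmall n m w)) := by
    apply PresentedGroup.ext
    intro x
    show φ (ψ (PresentedGroup.of x)) = PresentedGroup.of x
    rw [PresentedGroup.toGroup.of]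
    have h0 : φ (π (ρ (FreeGroup.of x)))
        = PresentedGroup.toGroup (hbig n m w) (PresentedGroup.of (Sum.inl x)) := rfl
    rw [h0, PresentedGroup.toGroup.of]
    rfl
  have h2 : ψ.comp φ = MonoidHom.id (PresentedGroup (relsBig n m w) ⧸ N) := by
    apply QuotientGroup.monoidHom_ext
    apply PresentedGroup.ext
    intro x
    show ψ (φ (π (PresentedGroup.of x))) = π (PresentedGroup.of x)
    have hφπ : φ (π (PresentedGroup.of x))
        = PresentedGroup.toGroup (hbig n m w) (PresentedGroup.of x) := rfl
    rw [hφπ, PresentedGroup.toGroup.of]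
    rcases x with i | j
    · show ψ (PresentedGroup.of i) = _
      rw [PresentedGroup.toGroup.of]
      rfl
    · show ψ ((Pel n m w)⁻¹) = π (sigma n m w j)
      rw [map_inv, hψPel, hainv]
      fin_cases j
      · rfl
      · show π (sigma n m w 0) = π (sigma n m w 1)
        rw [hb, hainv]
      · show π (sigma n m w 0) = π (sigma n m w 2)
        rw [hc]
  exact ⟨MonoidHom.toMulEquiv φ ψ h2 h1⟩
end
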